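/- Averaging over generating vectors: for an irreducible polynomial f over 𝔽₂ of degree m and G_m = {h ∈ 𝔽₂[x] : deg(h) < m}, the average over all g ∈ G_m^s of B_γ(g, f) equals 2^{-m} · Σ_{∅ ≠ u ⊆ [s]} γ_u (m/2)^{|u|} ∏_{i∈u}(b_i - a_i), where B_γ(g, f) = Σ_{∅ ≠ u ⊆ [s]} γ_u ∏_{i∈u}(b_i - a_i) · Σ_{k_u ∈ {1,...,2^m-1}^{|u|}, g_u · k_u ≡ 0 mod f} 2^{-μ(k_u)}. -/

import Mathlib

open scoped Classical

/-- identification of a natural number with a polynomial over `𝔽₂` via its binary digits. -/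
noncomputable def natToPoly (n : ℕ) : Polynomial (ZMod 2) :=
  ∑ i ∈ Finset.range (Nat.size n), if Nat.testBit n i then Polynomial.X ^ i else 0

/-- `μ(k)`, the length of the binary expansion of `k`. -/
def mu (k : ℕ) : ℕ := Nat.size k

/-- the figure-of-merit `B_γ(g, f)`. -/
noncomputable def Bcrit (s m : ℕ) (γ : Finset (Fin s) → ℝ) (a b : Fin s → ℝ)
    (f : Polynomial (ZMod 2)) (g : Fin s → ℕ) : ℝ :=
  ∑ u ∈ Finset.univ.powerset.filter (fun u : Finset (Fin s) => u.Nonempty),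
    γ u * (∏ i ∈ u, (b i - a i)) *
      ∑ k ∈ u.pi fun _ => Finset.Icc 1 (2 ^ m - 1),
        if f ∣ ∑ i ∈ u.attach, natToPoly (g i.1) * natToPoly (k i.1 i.2) then
          (1 : ℝ) / 2 ^ (∑ i ∈ u.attach, mu (k i.1 i.2))
        else 0

set_option linter.unusedVariables false

lemma natToPoly_coeff (n j : ℕ) :
    (natToPoly n).coeff j = if Nat.testBit n j then 1 else 0 := by
  rw [natToPoly, Polynomial.finset_sum_coeff]
  by_cases hj : j < Nat.size n
  · rw [Finset.sum_eq_single j]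
    · simp [Polynomial.coeff_X_pow, apply_ite (fun p => Polynomial.coeff p j)]
    · intro i hi hij
      simp [Polynomial.coeff_X_pow, hij, apply_ite (fun p => Polynomial.coeff p j),
        Ne.symm hij]
    · simp [hj]
  · have hb : Nat.testBit n j = false := by
      apply Nat.testBit_lt_two_pow
      calc n < 2 ^ Nat.size n := Nat.lt_size_self n
        _ ≤ 2 ^ j := Nat.pow_le_pow_right (by norm_num) (not_lt.mp hj)
    rw [hb, if_neg (by simp)]
    apply Finset.sum_eq_zero
    intro i hi
    have : i ≠ j := fun h => hj (h ▸ Finset.mem_range.mp hi)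
    simp only [Polynomial.coeff_X_pow, apply_ite (fun p => Polynomial.coeff p j),
      Polynomial.coeff_zero, if_neg (Ne.symm this), ite_self]

lemma natToPoly_injective : Function.Injective natToPoly := by
  intro n1 n2 h
  apply Nat.eq_of_testBit_eq
  intro i
  have h2 := congrArg (fun p => Polynomial.coeff p i) h
  simp only [natToPoly_coeff] at h2
  by_cases h1 : n1.testBit i <;> by_cases h3 : n2.testBit i <;> simp_all

lemma natToPoly_zero : natToPoly 0 = 0 := by simp [natToPoly]

lemma natToPoly_ne_zero {n : ℕ} (h : n ≠ 0) : natToPoly n ≠ 0 := by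
  intro hc
  exact h (natToPoly_injective (hc.trans natToPoly_zero.symm))

lemma natToPoly_degree_lt {n m : ℕ} (h : n < 2 ^ m) :
    (natToPoly n).degree < (m : ℕ) := by
  apply (Polynomial.degree_lt_iff_coeff_zero _ _).mpr
  intro j hj
  have hj' : m ≤ j := by exact_mod_cast hj
  have hb : n.testBit j = false :=
    Nat.testBit_lt_two_pow (lt_of_lt_of_le h (Nat.pow_le_pow_right (by norm_num) hj'))
  simp [natToPoly_coeff, hb]

lemma mu_sum_eq (m : ℕ) :
    ∑ k ∈ Finset.Icc 1 (2 ^ m - 1), (1 : ℝ) / 2 ^ (mu k) = m / 2 := by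
  show ∑ k ∈ Finset.Icc 1 (2 ^ m - 1), (1 : ℝ) / 2 ^ (Nat.size k) = m / 2
  induction m with
  | zero => simp
  | succ m ih =>
    have hp1 : (1 : ℕ) ≤ 2 ^ m := Nat.one_le_two_pow
    have hp2 : 2 ^ m < 2 ^ (m + 1) := by
      rw [pow_succ]; omega
    have hsplit : Finset.Icc 1 (2 ^ (m + 1) - 1) =
        Finset.Icc 1 (2 ^ m - 1) ∪ Finset.Icc (2 ^ m) (2 ^ (m + 1) - 1) := by
      ext k; simp only [Finset.mem_Icc, Finset.mem_union]; omega
    have hdisj : Disjoint (Finset.Icc 1 (2 ^ m - 1))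
        (Finset.Icc (2 ^ m) (2 ^ (m + 1) - 1)) := by
      rw [Finset.disjoint_left]
      intro k hk hk'
      simp only [Finset.mem_Icc] at hk hk'
      omega
    rw [hsplit, Finset.sum_union hdisj, ih]
    have hsize : ∀ k ∈ Finset.Icc (2 ^ m) (2 ^ (m + 1) - 1),
        (1 : ℝ) / 2 ^ (Nat.size k) = 1 / 2 ^ (m + 1) := by
      intro k hk
      simp only [Finset.mem_Icc] at hk
      have h1 : Nat.size k ≤ m + 1 := Nat.size_le.mpr (by omega)
      have h2 : m < Nat.size k := Nat.lt_size.mpr hk.1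
      have : Nat.size k = m + 1 := by omega
      rw [this]
    rw [Finset.sum_congr rfl hsize, Finset.sum_const, Nat.card_Icc]
    have hcard : 2 ^ (m + 1) - 1 + 1 - 2 ^ m = 2 ^ m := by omega
    rw [hcard, nsmul_eq_mul]
    have : ((2 : ℝ) ^ m) * (1 / 2 ^ (m + 1)) = 1 / 2 := by
      rw [pow_succ]; field_simp
    push_cast
    rw [this]
    ring

noncomputable def phi (f : Polynomial (ZMod 2)) (n : ℕ) : AdjoinRoot f :=
  AdjoinRoot.mk f (natToPoly n)

lemma phi_injOn {m : ℕ} {f : Polynomial (ZMod 2)} (hf : Irreducible f)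
    (hdeg : f.natDegree = m) :
    Set.InjOn (phi f) (Finset.range (2 ^ m)) := by
  intro n1 h1 n2 h2 h
  simp only [Finset.coe_range, Set.mem_Iio] at h1 h2
  have hdvd : f ∣ (natToPoly n1 - natToPoly n2) := by
    rw [← AdjoinRoot.mk_eq_zero, map_sub, sub_eq_zero]
    exact h
  have hdegf : f.degree = (m : ℕ) := by
    rw [Polynomial.degree_eq_natDegree hf.ne_zero, hdeg]
  by_contra hne
  have hsub : natToPoly n1 - natToPoly n2 ≠ 0 := by
    rw [sub_ne_zero]
    exact fun hc => hne (natToPoly_injective hc)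
  have := Polynomial.degree_le_of_dvd hdvd hsub
  have hlt : (natToPoly n1 - natToPoly n2).degree < (m : ℕ) :=
    lt_of_le_of_lt (Polynomial.degree_sub_le _ _)
      (max_lt (natToPoly_degree_lt h1) (natToPoly_degree_lt h2))
  rw [hdegf] at this
  exact absurd this (not_le.mpr hlt)

lemma finite_adjoinRoot {f : Polynomial (ZMod 2)} (hf : Irreducible f) :
    Finite (AdjoinRoot f) := by
  haveI := Fact.mk hf
  exact (Module.fintypeOfFintype (AdjoinRoot.powerBasisAux hf.ne_zero)).finite

lemma natCard_adjoinRoot {f : Polynomial (ZMod 2)} (hf : Irreducible f) :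
    Nat.card (AdjoinRoot f) = 2 ^ f.natDegree := by
  haveI := Fact.mk hf
  have b := AdjoinRoot.powerBasisAux hf.ne_zero
  haveI : Fintype (AdjoinRoot f) := Module.fintypeOfFintype b
  rw [Nat.card_eq_fintype_card, Module.card_fintype b, ZMod.card, Fintype.card_fin]

lemma phi_surj {m : ℕ} {f : Polynomial (ZMod 2)} (hf : Irreducible f)
    (hdeg : f.natDegree = m) (y : AdjoinRoot f) :
    ∃ n ∈ Finset.range (2 ^ m), phi f n = y := by
  haveI := Fact.mk hf
  haveI := finite_adjoinRoot hf
  haveI : Fintype (AdjoinRoot f) := Fintype.ofFinite _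
  have himg : (Finset.range (2 ^ m)).image (phi f) = Finset.univ := by
    apply Finset.eq_univ_of_card
    rw [Finset.card_image_of_injOn (phi_injOn hf hdeg), Finset.card_range,
      ← Nat.card_eq_fintype_card, natCard_adjoinRoot hf, hdeg]
  have : y ∈ (Finset.range (2 ^ m)).image (phi f) := by rw [himg]; exact Finset.mem_univ y
  simpa using Finset.mem_image.mp this

lemma card_solutions_K {s m : ℕ} (hs : 1 ≤ s) {f : Polynomial (ZMod 2)}
    (hf : Irreducible f) (hdeg : f.natDegree = m) [Fintype (AdjoinRoot f)]
    (u : Finset (Fin s)) (hu : u.Nonempty) (κ : Fin s → AdjoinRoot f)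
    (hκ : ∀ i ∈ u, κ i ≠ 0) :
    (Finset.univ.filter
      (fun v : Fin s → AdjoinRoot f => ∑ i ∈ u, v i * κ i = 0)).card
      = 2 ^ (m * (s - 1)) := by
  haveI := Fact.mk hf
  obtain ⟨i0, hi0⟩ := hu
  let A : (Fin s → AdjoinRoot f) →+ AdjoinRoot f :=
    { toFun := fun v => ∑ i ∈ u, v i * κ i
      map_zero' := by simp
      map_add' := by intro v w; simp [add_mul, Finset.sum_add_distrib] }
  have hAsurj : Function.Surjective A := by
    intro y
    refine ⟨fun i => if i = i0 then y * (κ i0)⁻¹ else 0, ?_⟩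
    show (∑ i ∈ u, (if i = i0 then y * (κ i0)⁻¹ else 0) * κ i) = y
    rw [Finset.sum_eq_single i0]
    · rw [if_pos rfl, mul_assoc, inv_mul_cancel₀ (hκ i0 hi0), mul_one]
    · intro i hi hne; rw [if_neg hne, zero_mul]
    · intro h; exact absurd hi0 h
  have hcard1 : (Finset.univ.filter
      (fun v : Fin s → AdjoinRoot f => ∑ i ∈ u, v i * κ i = 0)).card
      = Nat.card A.ker := by
    rw [Nat.card_eq_fintype_card, Fintype.card_subtype]
    congr 1
    ext v
    simp [A, AddMonoidHom.mem_ker]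
  have hKcard : Nat.card (AdjoinRoot f) = 2 ^ m := by
    rw [natCard_adjoinRoot hf, hdeg]
  have hmul : Nat.card A.ker * 2 ^ m = 2 ^ (m * s) := by
    have h1 := AddSubgroup.card_mul_index A.ker
    rw [AddSubgroup.index_ker, AddMonoidHom.range_eq_top.mpr hAsurj,
      Nat.card_congr AddSubgroup.topEquiv.toEquiv, Nat.card_fun, hKcard] at h1
    have h2 : Nat.card (Fin s) = s := by simp
    rw [h2, ← pow_mul] at h1
    exact h1
  rw [hcard1]
  have hpos : 0 < 2 ^ m := Nat.pow_pos (by norm_num)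
  apply Nat.eq_of_mul_eq_mul_right hpos
  rw [hmul, ← pow_add]
  have : m * (s - 1) + m = m * s := by
    conv_rhs => rw [← Nat.sub_add_cancel hs]
    ring
  rw [this]

lemma not_dvd_natToPoly {m : ℕ} {f : Polynomial (ZMod 2)} (hf : Irreducible f)
    (hdeg : f.natDegree = m) {n : ℕ} (hn : n ∈ Finset.Icc 1 (2 ^ m - 1)) :
    ¬ f ∣ natToPoly n := by
  simp only [Finset.mem_Icc] at hn
  have h1 : (1 : ℕ) ≤ 2 ^ m := Nat.one_le_two_pow
  have hlt : n < 2 ^ m := by omega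
  intro hdvd
  have hne : natToPoly n ≠ 0 := natToPoly_ne_zero (by omega)
  have hle := Polynomial.degree_le_of_dvd hdvd hne
  rw [Polynomial.degree_eq_natDegree hf.ne_zero, hdeg] at hle
  exact absurd hle (not_le.mpr (natToPoly_degree_lt hlt))

lemma count_main {s m : ℕ} (hs : 1 ≤ s) {f : Polynomial (ZMod 2)}
    (hf : Irreducible f) (hdeg : f.natDegree = m)
    (u : Finset (Fin s)) (hu : u.Nonempty)
    (k : (i : Fin s) → i ∈ u → ℕ)
    (hk : ∀ i (hi : i ∈ u), k i hi ∈ Finset.Icc 1 (2 ^ m - 1)) :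
    ((Fintype.piFinset fun _ : Fin s => Finset.range (2 ^ m)).filter
      (fun g => f ∣ ∑ i ∈ u.attach, natToPoly (g i.1) * natToPoly (k i.1 i.2))).card
      = 2 ^ (m * (s - 1)) := by
  haveI := Fact.mk hf
  haveI := finite_adjoinRoot hf
  haveI : Fintype (AdjoinRoot f) := Fintype.ofFinite _
  set κ : Fin s → AdjoinRoot f :=
    fun i => if h : i ∈ u then phi f (k i h) else 1 with hκdef
  have hκ : ∀ i ∈ u, κ i ≠ 0 := by
    intro i hi
    rw [hκdef]
    simp only [dif_pos hi]
    rw [phi, Ne, AdjoinRoot.mk_eq_zero]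
    exact not_dvd_natToPoly hf hdeg (hk i hi)
  have key : ∀ g : Fin s → ℕ,
      (AdjoinRoot.mk f (∑ i ∈ u.attach, natToPoly (g i.1) * natToPoly (k i.1 i.2)))
        = ∑ i ∈ u, phi f (g i) * κ i := by
    intro g
    rw [map_sum, ← Finset.sum_attach u (fun i => phi f (g i) * κ i)]
    apply Finset.sum_congr rfl
    intro i _
    rw [map_mul]
    congr 1
    rw [hκdef]
    simp only [dif_pos i.2]
    rfl
  rw [← card_solutions_K (m := m) hs hf hdeg u hu κ hκ]
  apply Finset.card_bij (fun g _ => fun j => phi f (g j))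
  · intro g hg
    rw [Finset.mem_filter] at hg ⊢
    refine ⟨Finset.mem_univ _, ?_⟩
    rw [← key g, AdjoinRoot.mk_eq_zero]
    exact hg.2
  · intro g1 h1 g2 h2 heq
    rw [Finset.mem_filter, Fintype.mem_piFinset] at h1 h2
    funext j
    exact phi_injOn hf hdeg (by simpa using h1.1 j) (by simpa using h2.1 j)
      (congrFun heq j)
  · intro v hv
    rw [Finset.mem_filter] at hv
    choose g hg1 hg2 using fun j => phi_surj hf hdeg (v j)
    refine ⟨g, ?_, funext hg2⟩
    rw [Finset.mem_filter, Fintype.mem_piFinset]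
    refine ⟨fun j => hg1 j, ?_⟩
    rw [← AdjoinRoot.mk_eq_zero, key g]
    have : ∀ i ∈ u, phi f (g i) * κ i = v i * κ i := by
      intro i _
      rw [hg2 i]
    rw [Finset.sum_congr rfl this]
    exact hv.2


theorem Bcrit_average (s m : ℕ) (hs : 1 ≤ s) (hm : 1 ≤ m)
    (γ : Finset (Fin s) → ℝ) (hγ : ∀ u, 0 < γ u) (a b : Fin s → ℝ) (hab : ∀ i, a i < b i)
    (f : Polynomial (ZMod 2)) (hf : Irreducible f) (hdeg : f.natDegree = m) :
    (∑ g ∈ Fintype.piFinset fun _ : Fin s => Finset.range (2 ^ m),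
        Bcrit s m γ a b f g) / 2 ^ (s * m) =
      (1 / 2 ^ m) *
        ∑ u ∈ Finset.univ.powerset.filter (fun u : Finset (Fin s) => u.Nonempty),
          γ u * ((m : ℝ) / 2) ^ u.card * ∏ i ∈ u, (b i - a i) := by
  have hsum : (∑ g ∈ Fintype.piFinset fun _ : Fin s => Finset.range (2 ^ m),
      Bcrit s m γ a b f g)
      = ∑ u ∈ Finset.univ.powerset.filter (fun u : Finset (Fin s) => u.Nonempty),
          γ u * (∏ i ∈ u, (b i - a i)) *
            ((2 : ℝ) ^ (m * (s - 1)) * ((m : ℝ) / 2) ^ u.card) := by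
    unfold Bcrit
    rw [Finset.sum_comm]
    refine Finset.sum_congr rfl ?_
    intro u hu
    rw [Finset.mem_filter] at hu
    rw [← Finset.mul_sum]
    congr 1
    rw [Finset.sum_comm]
    have step1 : ∀ k ∈ u.pi (fun _ => Finset.Icc 1 (2 ^ m - 1)),
        (∑ g ∈ Fintype.piFinset fun _ : Fin s => Finset.range (2 ^ m),
          if f ∣ ∑ i ∈ u.attach, natToPoly (g i.1) * natToPoly (k i.1 i.2) then
            (1 : ℝ) / 2 ^ (∑ i ∈ u.attach, mu (k i.1 i.2)) else 0)
        = (2 : ℝ) ^ (m * (s - 1)) *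
            ∏ i ∈ u.attach, (1 : ℝ) / 2 ^ (mu (k i.1 i.2)) := by
      intro k hk
      rw [← Finset.sum_filter, Finset.sum_const, nsmul_eq_mul]
      rw [count_main hs hf hdeg u hu.2 k (fun i hi => Finset.mem_pi.mp hk i hi)]
      push_cast
      congr 1
      rw [Finset.prod_div_distrib, Finset.prod_const_one,
        Finset.prod_pow_eq_pow_sum]
    rw [Finset.sum_congr rfl step1, ← Finset.mul_sum]
    congr 1
    rw [← Finset.prod_sum u (fun _ => Finset.Icc 1 (2 ^ m - 1))
      (fun _ j => (1 : ℝ) / 2 ^ (mu j))]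
    rw [Finset.prod_congr rfl (fun i _ => mu_sum_eq m), Finset.prod_const]
  rw [hsum, Finset.sum_div, Finset.mul_sum]
  refine Finset.sum_congr rfl ?_
  intro u hu
  have h2 : (2 : ℝ) ^ (s * m) = 2 ^ (m * (s - 1)) * 2 ^ m := by
    rw [← pow_add]
    congr 1
    conv_lhs => rw [← Nat.sub_add_cancel hs]
    ring
  rw [h2]
  have h3 : (2 : ℝ) ^ (m * (s - 1)) ≠ 0 := by positivity
  have h4 : (2 : ℝ) ^ m ≠ 0 := by positivity
  field_simp
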